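/- A vector space V over K = k((y)) that is of Tate type as a k[[y]]-module is finite-dimensional over K, and conversely every finite-dimensional K-vector space is of Tate type. -/

import Mathlib

open scoped Classical
noncomputable section

/-- A `k[[y]]`-module `M` is of Tate type if it has a finitely generated submodule `M'`
such that `M/M'` is torsion and the `y`-annihilator of `M/M'` is finite-dimensional
over `k`. -/
def IsTateType (k M : Type*) [Field k] [AddCommGroup M] [Module k M]
    [Module (PowerSeries k) M] [IsScalarTower k (PowerSeries k) M] : Prop :=
  ∃ M' : Submodule (PowerSeries k) M, M'.FG ∧
    (∀ x : M ⧸ M', ∃ f : PowerSeries k, f ≠ 0 ∧ f • x = 0) ∧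
    FiniteDimensional k
      (LinearMap.ker ((Algebra.lsmul k k (M ⧸ M') (PowerSeries.X : PowerSeries k) :
        (M ⧸ M') →ₗ[k] (M ⧸ M'))))

section Aux

variable (k V : Type*) [Field k]
    [AddCommGroup V] [Module (LaurentSeries k) V] [Module (PowerSeries k) V] [Module k V]
    [IsScalarTower k (PowerSeries k) V]
    [IsScalarTower (PowerSeries k) (LaurentSeries k) V]
    [IsScalarTower k (LaurentSeries k) V]

variable {k V} in
omit [Module k V] [IsScalarTower k (PowerSeries k) V] [IsScalarTower k (LaurentSeries k) V] in
/-- Elements of the `k[[y]]`-span of a basis have integral coordinates. -/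
theorem repr_isInteger_of_mem_span {ι : Type*} (b : Module.Basis ι (LaurentSeries k) V) {v : V}
    (hv : v ∈ Submodule.span (PowerSeries k) (Set.range b)) (i : ι) :
    IsLocalization.IsInteger (PowerSeries k) (b.repr v i) := by
  induction hv using Submodule.span_induction with
  | mem x hx =>
    obtain ⟨j, rfl⟩ := hx
    rw [b.repr_self]
    rcases eq_or_ne j i with rfl | hne
    · rw [Finsupp.single_eq_same]; exact IsLocalization.isInteger_one
    · rw [Finsupp.single_eq_of_ne' hne]; exact IsLocalization.isInteger_zero
  | zero => simpa using IsLocalization.isInteger_zero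
  | add x y _ _ hx hy => simpa using IsLocalization.isInteger_add hx hy
  | smul r x _ hx =>
    have : b.repr (r • x) i = r • b.repr x i := by
      rw [← IsScalarTower.algebraMap_smul (LaurentSeries k) r x, map_smul,
        Finsupp.smul_apply, Algebra.smul_def r]
      rfl
    rw [this]
    exact IsLocalization.isInteger_smul hx

end Aux

/-- A vector space over `K = k((y))` is of Tate type as a `k[[y]]`-module if and only
if it is finite-dimensional over `K`. -/
theorem tateType_iff_finiteDimensional (k V : Type*) [Field k] [IsAlgClosed k] [CharZero k]
    [AddCommGroup V] [Module (LaurentSeries k) V] [Module (PowerSeries k) V] [Module k V]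
    [IsScalarTower k (PowerSeries k) V]
    [IsScalarTower (PowerSeries k) (LaurentSeries k) V]
    [IsScalarTower k (LaurentSeries k) V] :
    IsTateType k V ↔ FiniteDimensional (LaurentSeries k) V := by
  constructor
  · rintro ⟨M', ⟨S, hS⟩, htor, -⟩
    have key : ∀ v : V, v ∈ Submodule.span (LaurentSeries k) (S : Set V) := by
      intro v
      obtain ⟨f, hf, hfx⟩ := htor (Submodule.Quotient.mk v)
      rw [← Submodule.Quotient.mk_smul, Submodule.Quotient.mk_eq_zero] at hfx
      -- f • v ∈ M' = span R S ≤ span K S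
      have h1 : f • v ∈ Submodule.span (LaurentSeries k) (S : Set V) := by
        have hle : Submodule.span (PowerSeries k) (S : Set V) ≤
            (Submodule.span (LaurentSeries k) (S : Set V)).restrictScalars (PowerSeries k) :=
          Submodule.span_le.2 Submodule.subset_span
        exact hle (hS ▸ hfx)
      have hfK : algebraMap (PowerSeries k) (LaurentSeries k) f ≠ 0 := by
        intro h0
        exact hf (IsFractionRing.injective (PowerSeries k) (LaurentSeries k) (by simpa using h0))
      have : v = (algebraMap (PowerSeries k) (LaurentSeries k) f)⁻¹ • (f • v) := by
        rw [← IsScalarTower.algebraMap_smul (LaurentSeries k) f v, smul_smul,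
          inv_mul_cancel₀ hfK, one_smul]
      rw [this]
      exact Submodule.smul_mem _ _ h1
    have : Module.Finite (LaurentSeries k) V :=
      Module.finite_def.mpr ⟨S, eq_top_iff.mpr fun v _ => key v⟩
    exact this
  · intro h
    set K := LaurentSeries k
    set R := PowerSeries k
    let n := Module.finrank K V
    let b : Module.Basis (Fin n) K V := Module.finBasis K V
    refine ⟨Submodule.span R (Set.range b), Submodule.fg_span (Set.finite_range b), ?_, ?_⟩
    · -- torsion
      intro x
      obtain ⟨v, rfl⟩ := Submodule.Quotient.mk_surjective _ x
      obtain ⟨f, hf⟩ := IsLocalization.exist_integer_multiples_of_finite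
        (nonZeroDivisors R) (fun i => b.repr v i)
      refine ⟨f, nonZeroDivisors.coe_ne_zero f, ?_⟩
      rw [← Submodule.Quotient.mk_smul, Submodule.Quotient.mk_eq_zero]
      have hv : (f : R) • v = ∑ i, ((f : R) • (b.repr v i)) • b i := by
        conv_lhs => rw [← b.sum_repr v]
        rw [Finset.smul_sum]
        exact Finset.sum_congr rfl fun i _ => (smul_assoc ((f : R)) _ _).symm
      rw [hv]
      refine Submodule.sum_mem _ fun i _ => ?_
      obtain ⟨g, hg⟩ := hf i
      rw [← hg, IsScalarTower.algebraMap_smul]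
      exact Submodule.smul_mem _ _ (Submodule.subset_span ⟨i, rfl⟩)
    · -- the y-annihilator is finite dimensional
      set M' := Submodule.span R (Set.range b)
      have hXK : algebraMap R K PowerSeries.X ≠ 0 := by
        intro h0
        exact PowerSeries.X_ne_zero
          (IsFractionRing.injective R K (by simpa using h0))
      let w : Fin n → V ⧸ M' := fun i =>
        Submodule.Quotient.mk ((algebraMap R K PowerSeries.X)⁻¹ • b i)
      let φ : (Fin n → k) →ₗ[k] V ⧸ M' := Fintype.linearCombination k w
      have hker : LinearMap.ker ((Algebra.lsmul k k (V ⧸ M') (PowerSeries.X : R) :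
          (V ⧸ M') →ₗ[k] (V ⧸ M'))) ≤ LinearMap.range φ := by
        rintro x hx
        have hx' : (PowerSeries.X : R) • x = 0 := hx
        obtain ⟨v, rfl⟩ := Submodule.Quotient.mk_surjective _ x
        rw [← Submodule.Quotient.mk_smul, Submodule.Quotient.mk_eq_zero] at hx'
        -- coordinates of X • v are integral
        have hint : ∀ i, IsLocalization.IsInteger R (b.repr ((PowerSeries.X : R) • v) i) :=
          fun i => repr_isInteger_of_mem_span b hx' i
        choose g hg using hint
        refine ⟨fun i => PowerSeries.constantCoeff (g i), ?_⟩
        have hrepr : ∀ i, b.repr v i =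
            algebraMap R K ((PowerSeries.mk fun p => PowerSeries.coeff (p + 1) (g i))) +
            (PowerSeries.constantCoeff (g i)) • (algebraMap R K PowerSeries.X)⁻¹ := by
          intro i
          have h1 : algebraMap R K PowerSeries.X * b.repr v i = algebraMap R K (g i) := by
            rw [hg i, ← IsScalarTower.algebraMap_smul K (PowerSeries.X : R) v, map_smul]
            rfl
          have h2 : b.repr v i = (algebraMap R K PowerSeries.X)⁻¹ * algebraMap R K (g i) := by
            rw [← h1, ← mul_assoc, inv_mul_cancel₀ hXK, one_mul]
          rw [h2]
          conv_lhs => rw [(g i).eq_X_mul_shift_add_const]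
          rw [map_add, map_mul, mul_add, ← mul_assoc, inv_mul_cancel₀ hXK, one_mul]
          congr 1
          rw [mul_comm, show algebraMap R K (PowerSeries.C (PowerSeries.constantCoeff (g i)))
              = HahnSeries.C (PowerSeries.constantCoeff (g i)) from
            HahnSeries.ofPowerSeries_C _, HahnSeries.C_mul_eq_smul]
        -- now compute φ applied to the constant coefficients
        have hsum : (∑ i, (PowerSeries.constantCoeff (g i)) •
            ((algebraMap R K PowerSeries.X)⁻¹ • b i)) - v ∈ M' := by
          have hv : v = ∑ i, b.repr v i • b i := (b.sum_repr v).symm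
          have : v - ∑ i, (PowerSeries.constantCoeff (g i)) •
              ((algebraMap R K PowerSeries.X)⁻¹ • b i) =
              ∑ i, (PowerSeries.mk fun p => PowerSeries.coeff (p + 1) (g i) : R) • b i := by
            conv_lhs => rw [hv]
            rw [← Finset.sum_sub_distrib]
            refine Finset.sum_congr rfl fun i _ => ?_
            rw [hrepr i, add_smul, smul_assoc, add_sub_cancel_right,
              IsScalarTower.algebraMap_smul]
          have hmem : v - ∑ i, (PowerSeries.constantCoeff (g i)) •
              ((algebraMap R K PowerSeries.X)⁻¹ • b i) ∈ M' := by
            rw [this]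
            exact Submodule.sum_mem _ fun i _ =>
              Submodule.smul_mem _ _ (Submodule.subset_span ⟨i, rfl⟩)
          simpa using Submodule.neg_mem _ hmem
        have hmksum : ∀ (u : Fin n → V), (Submodule.Quotient.mk (∑ i, u i) : V ⧸ M') =
            ∑ i, Submodule.Quotient.mk (u i) := fun u => by
          rw [← Submodule.mkQ_apply, map_sum]; rfl
        have : φ (fun i => PowerSeries.constantCoeff (g i)) =
            Submodule.Quotient.mk (∑ i, (PowerSeries.constantCoeff (g i)) •
              ((algebraMap R K PowerSeries.X)⁻¹ • b i)) := by
          rw [Fintype.linearCombination_apply, hmksum]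
          exact Finset.sum_congr rfl fun i _ => (Submodule.Quotient.mk_smul M' _ _).symm
        rw [this, Submodule.Quotient.eq]
        exact hsum
      exact Submodule.finiteDimensional_of_le hker
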